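/- Let M be a commutative reduced monoid that is separative, i.e., for all a, b, c ∈ M, if a + c = b + c and c ∈ add(a) ∩ add(b), then a = b. If n > m ≥ 0 and k, k' ≥ 0 are integers and x, y ∈ M satisfy n·x + k·y = m·x + k'·y, then (n − m + 1)·x + k·y = x + k'·y. -/
import Mathlib


/-- add(a) = the set of summands of positive finite multiples of a. -/
def addCl {M : Type*} [AddCommMonoid M] (a : M) : Set M :=
  {u | ∃ z : M, ∃ t : ℕ, 1 ≤ t ∧ u + z = t • a}

/-- in a reduced separative commutative monoid, if n > m and
n•x + k•y = m•x + k'•y, then (n - m + 1)•x + k•y = x + k'•y. -/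
theorem separative_shift {M : Type*} [AddCommMonoid M]
    (hred : ∀ a b : M, a + b = 0 → a = 0 ∧ b = 0)
    (hsep : ∀ a b c : M, a + c = b + c → c ∈ addCl a → c ∈ addCl b → a = b)
    (x y : M) (n m k k' : ℕ) (hnm : m < n)
    (h : n • x + k • y = m • x + k' • y) :
    (n - m + 1) • x + k • y = x + k' • y := by
  set d := n - m + 1 with hd
  have hdm : d + m = n + 1 := by omega
  apply hsep _ _ (m • x)
  · -- (d•x + k•y) + m•x = (x + k'•y) + m•x
    have lhs : (d • x + k • y) + m • x = x + (n • x + k • y) := by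
      rw [add_right_comm, ← add_nsmul, hdm, add_comm n 1, add_nsmul, one_nsmul, add_assoc]
    have rhs : (x + k' • y) + m • x = x + (m • x + k' • y) := by
      rw [add_assoc, add_comm (k' • y)]
    rw [lhs, rhs, h]
  · -- m•x ∈ addCl (d•x + k•y)
    refine ⟨(d * (m + 1) - m) • x + (k * (m + 1)) • y, m + 1, le_add_self, ?_⟩
    have hle : m + 1 ≤ d * (m + 1) := Nat.le_mul_of_pos_left _ (by omega)
    have e1 : d * (m + 1) = m + (d * (m + 1) - m) :=
      (Nat.add_sub_cancel' (le_trans (Nat.le_succ m) hle)).symm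
    conv_rhs => rw [smul_add, ← mul_nsmul, ← mul_nsmul, e1, add_nsmul]
    rw [add_assoc]
  · -- m•x ∈ addCl (x + k'•y)
    refine ⟨x + (k' * (m + 1)) • y, m + 1, le_add_self, ?_⟩
    conv_rhs => rw [smul_add, ← mul_nsmul, add_nsmul, one_nsmul]
    rw [add_assoc]
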